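/- For the graph 2nK_2 (the disjoint union of 2n independent edges), the maximum k such that 2nK_2 is in (2,k)-LCP equals n, while the minimum over all bipartitions (V1,V2) of V of max{|E(V1)|,|E(V2)|} equals 0. -/

import Mathlib

open Finset

open scoped Classical in
/-- `G ∈ (c,k)`-LCP: there is a `c`-coloring such that each color has at least `k`
monochromatic edges. -/
def LCP {V : Type*} [Fintype V] (G : SimpleGraph V) (c k : ℕ) : Prop :=
  ∃ φ : V → Fin c, ∀ i : Fin c,
    k ≤ (G.edgeFinset.filter (fun e => ∀ v ∈ e, φ v = i)).card

/-- `2nK₂`: the disjoint union of `2n` independent edges, on `2n × 2` vertices: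
`(i, a)` and `(j, b)` are adjacent iff `i = j` and `a ≠ b`. -/
def matchingGraph (n : ℕ) : SimpleGraph (Fin (2 * n) × Fin 2) where
  Adj x y := x.1 = y.1 ∧ x.2 ≠ y.2
  symm := ⟨by intro x y h; exact ⟨h.1.symm, h.2.symm⟩⟩
  loopless := ⟨by rintro x ⟨-, h⟩; exact h rfl⟩


def edgeOf (n : ℕ) (i : Fin (2 * n)) : Sym2 (Fin (2 * n) × Fin 2) :=
  s((i, 0), (i, 1))

lemma edgeOf_inj (n : ℕ) : Function.Injective (edgeOf n) := by
  intro i j h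
  rw [edgeOf, edgeOf, Sym2.eq_iff] at h
  rcases h with ⟨h1, -⟩ | ⟨h1, -⟩ <;> exact (Prod.ext_iff.mp h1).1

lemma edgeOf_mem_edgeSet (n : ℕ) (i : Fin (2 * n)) :
    edgeOf n i ∈ (matchingGraph n).edgeSet :=
  (SimpleGraph.mem_edgeSet _).mpr ⟨rfl, by simp⟩

lemma mem_edgeFinset_iff (n : ℕ) [Fintype (matchingGraph n).edgeSet]
    (e : Sym2 (Fin (2 * n) × Fin 2)) :
    e ∈ (matchingGraph n).edgeFinset ↔ ∃ i, e = edgeOf n i := by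
  rw [SimpleGraph.mem_edgeFinset]
  induction e using Sym2.ind with
  | _ x y =>
    constructor
    · intro h
      obtain ⟨h1, h2⟩ := (SimpleGraph.mem_edgeSet _).mp h
      refine ⟨x.1, ?_⟩
      have hx := x.2.isLt; have hy := y.2.isLt
      have h2' : x.2.val ≠ y.2.val := fun hh => h2 (Fin.ext hh)
      have hcase : (x.2.val = 0 ∧ y.2.val = 1) ∨ (x.2.val = 1 ∧ y.2.val = 0) := by omega
      rcases hcase with ⟨ha, hb⟩ | ⟨ha, hb⟩
      · rw [edgeOf, show x = (x.1, (0:Fin 2)) from Prod.ext rfl (Fin.ext ha),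
          show y = (x.1, (1:Fin 2)) from Prod.ext h1.symm (Fin.ext hb)]
      · rw [edgeOf, show x = (x.1, (1:Fin 2)) from Prod.ext rfl (Fin.ext ha),
          show y = (x.1, (0:Fin 2)) from Prod.ext h1.symm (Fin.ext hb), Sym2.eq_swap]
    · rintro ⟨i, h⟩
      rw [h]
      exact edgeOf_mem_edgeSet n i

lemma edgeFinset_card (n : ℕ) [Fintype (matchingGraph n).edgeSet] :
    (matchingGraph n).edgeFinset.card = 2 * n := by
  classical
  have hE : (matchingGraph n).edgeFinset = Finset.univ.image (edgeOf n) := by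
    ext e
    simp only [Finset.mem_image, Finset.mem_univ, true_and, mem_edgeFinset_iff]
    exact ⟨fun ⟨i, h⟩ => ⟨i, h.symm⟩, fun ⟨i, h⟩ => ⟨i, h.symm⟩⟩
  rw [hE, Finset.card_image_of_injective _ (edgeOf_inj n), Finset.card_univ, Fintype.card_fin]

lemma empty_filter (n : ℕ) [Fintype (matchingGraph n).edgeSet]
    (P : Sym2 (Fin (2 * n) × Fin 2) → Prop) [DecidablePred P]
    (hP : ∀ i : Fin (2 * n), ¬ P (edgeOf n i)) :
    ((matchingGraph n).edgeFinset.filter P).card = 0 := by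
  rw [Finset.card_eq_zero, Finset.eq_empty_iff_forall_notMem]
  intro e he
  rw [Finset.mem_filter, mem_edgeFinset_iff] at he
  obtain ⟨⟨i, rfl⟩, hPe⟩ := he
  exact hP i hPe

open scoped Classical in
lemma card_lt_filter (n : ℕ) :
    (Finset.univ.filter (fun i : Fin (2 * n) => i.val < n)).card = n := by
  have h : (Finset.univ.filter (fun i : Fin (2 * n) => i.val < n)).card
      = (Finset.range n).card := by
    refine Finset.card_bij (fun a _ => (a : ℕ)) ?_ ?_ ?_
    · intro a ha; simp at ha ⊢; omega
    · intro a ha b hb hab; exact Fin.ext hab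
    · intro b hb
      simp at hb
      exact ⟨⟨b, by omega⟩, by simp; omega, rfl⟩
  simpa using h

open scoped Classical in
lemma count_c (n : ℕ) (c : Fin 2) :
    (Finset.univ.filter
      (fun i : Fin (2 * n) => (if i.val < n then (0 : Fin 2) else 1) = c)).card = n := by
  fin_cases c
  · show (Finset.univ.filter
        (fun i : Fin (2 * n) => (if i.val < n then (0 : Fin 2) else 1) = 0)).card = n
    have h : (Finset.univ.filter
        (fun i : Fin (2 * n) => (if i.val < n then (0 : Fin 2) else 1) = 0))
        = Finset.univ.filter (fun i : Fin (2 * n) => i.val < n) := by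
      ext i; by_cases hi : i.val < n <;> simp [hi, Fin.ext_iff]
    rw [h, card_lt_filter]
  · show (Finset.univ.filter
        (fun i : Fin (2 * n) => (if i.val < n then (0 : Fin 2) else 1) = 1)).card = n
    have h : (Finset.univ.filter
        (fun i : Fin (2 * n) => (if i.val < n then (0 : Fin 2) else 1) = 1))
        = Finset.univ.filter (fun i : Fin (2 * n) => ¬ i.val < n) := by
      ext i; by_cases hi : i.val < n <;> simp [hi, Fin.ext_iff]
    rw [h]
    have h3 := Finset.card_filter_add_card_filter_not
      (s := (Finset.univ : Finset (Fin (2 * n)))) (p := fun i : Fin (2 * n) => i.val < n)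
    rw [card_lt_filter, Finset.card_univ, Fintype.card_fin] at h3
    omega

lemma lb (n : ℕ) (instF : Fintype (matchingGraph n).edgeSet) (c : Fin 2)
    (instP : DecidablePred (fun e : Sym2 (Fin (2 * n) × Fin 2) =>
      ∀ v ∈ e, (if v.1.val < n then (0 : Fin 2) else 1) = c)) :
    n ≤ ((matchingGraph n).edgeFinset.filter
      (fun e => ∀ v ∈ e, (if v.1.val < n then (0 : Fin 2) else 1) = c)).card := by
  classical
  refine le_trans (le_of_eq (count_c n c).symm) ?_
  rw [← Finset.card_image_of_injective
    (Finset.univ.filter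
      (fun i : Fin (2 * n) => (if i.val < n then (0 : Fin 2) else 1) = c)) (edgeOf_inj n)]
  apply Finset.card_le_card
  intro e he
  simp only [Finset.mem_image, Finset.mem_filter, Finset.mem_univ, true_and] at he
  obtain ⟨i, hi, rfl⟩ := he
  rw [Finset.mem_filter]
  refine ⟨(SimpleGraph.mem_edgeFinset).mpr (edgeOf_mem_edgeSet n i), ?_⟩
  intro v hv
  rw [edgeOf, Sym2.mem_iff] at hv
  rcases hv with rfl | rfl <;> exact hi

lemma ub (n k : ℕ) (instF : Fintype (matchingGraph n).edgeSet)
    (φ : Fin (2 * n) × Fin 2 → Fin 2)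
    (inst0 : DecidablePred
      (fun e : Sym2 (Fin (2 * n) × Fin 2) => ∀ v ∈ e, φ v = 0))
    (inst1 : DecidablePred
      (fun e : Sym2 (Fin (2 * n) × Fin 2) => ∀ v ∈ e, φ v = 1))
    (h0 : k ≤ ((matchingGraph n).edgeFinset.filter
      (fun e => ∀ v ∈ e, φ v = 0)).card)
    (h1 : k ≤ ((matchingGraph n).edgeFinset.filter
      (fun e => ∀ v ∈ e, φ v = 1)).card) :
    k ≤ n := by
  have hdisj : Disjoint
      ((matchingGraph n).edgeFinset.filter (fun e => ∀ v ∈ e, φ v = 0))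
      ((matchingGraph n).edgeFinset.filter (fun e => ∀ v ∈ e, φ v = 1)) := by
    rw [Finset.disjoint_left]
    intro e he0 he1
    rw [Finset.mem_filter, mem_edgeFinset_iff] at he0
    obtain ⟨⟨i, rfl⟩, hP0⟩ := he0
    rw [Finset.mem_filter] at he1
    have hm : (i, (0 : Fin 2)) ∈ edgeOf n i := by rw [edgeOf, Sym2.mem_iff]; left; rfl
    have e0 := hP0 _ hm
    have e1 := he1.2 _ hm
    rw [e0] at e1
    exact absurd e1 (by decide)
  have hunion : ((matchingGraph n).edgeFinset.filter (fun e => ∀ v ∈ e, φ v = 0)).card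
      + ((matchingGraph n).edgeFinset.filter (fun e => ∀ v ∈ e, φ v = 1)).card
      ≤ (matchingGraph n).edgeFinset.card := by
    rw [← Finset.card_union_of_disjoint hdisj]
    apply Finset.card_le_card
    intro e he
    rcases Finset.mem_union.mp he with h' | h' <;> exact (Finset.mem_filter.mp h').1
  rw [edgeFinset_card] at hunion
  omega

open scoped Classical in
theorem stmt_17 (n : ℕ) :
    IsGreatest {k : ℕ | LCP (matchingGraph n) 2 k} n ∧
    IsLeast {m : ℕ | ∃ A : Finset (Fin (2 * n) × Fin 2),
      m = max ((matchingGraph n).edgeFinset.filter (fun e => ∀ v ∈ e, v ∈ A)).card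
              ((matchingGraph n).edgeFinset.filter (fun e => ∀ v ∈ e, v ∉ A)).card} 0 := by
  constructor
  · constructor
    · exact ⟨fun p => if p.1.val < n then 0 else 1, fun c => lb n _ c _⟩
    · rintro k ⟨φ, hφ⟩
      exact ub n k _ φ _ _ (hφ 0) (hφ 1)
  · constructor
    · refine ⟨Finset.univ.filter (fun p => p.2 = 0), ?_⟩
      rw [empty_filter, empty_filter]
      · simp
      · intro i h
        have := h (i, 0) (by rw [edgeOf, Sym2.mem_iff]; left; rfl)
        simp at this
      · intro i h
        have := h (i, 1) (by rw [edgeOf, Sym2.mem_iff]; right; rfl)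
        simp at this
    · intro m _; exact Nat.zero_le m
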